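/- Suppose $\hat w$ minimizes $F(w) = \frac{1}{2}\|Aw - \xi\|^2 + \frac{\lambda}{2}\|\Omega(\mu_0 + w)\|^2$ over $\mathbb{R}^p$ and $\hat w^{(S)}$ minimizes $F$ over $\{w : w_S = 0\}$, where $S \subseteq [p]$, $\lambda > 0$, and $\Omega$ is diagonal with entries bounded below by $c > 0$. Then $\frac{1}{2}\|A(\hat w^{(S)} - \hat w)\|^2 + \frac{\lambda c^2}{2}\|\hat w_S\|^2 \le \|\hat w_S\| \left(\|A_S^T(A_{-S}\hat w^{(S)}_{-S} - \xi)\| + \lambda\|\Omega_S^2 \mu_{0,S}\|\right)$. -/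

import Mathlib

open Matrix

/-- Leave-`S`-out comparison inequality for the ridge objective
`F(w) = ½‖Aw - ξ‖² + (λ/2)‖Ω(μ₀ + w)‖²`: if `ŵ` is the global minimizer and `ŵ⁽ˢ⁾`
minimizes `F` subject to `w_S = 0`, then
`½‖A(ŵ⁽ˢ⁾ - ŵ)‖² + (λc²/2)‖ŵ_S‖² ≤ ‖ŵ_S‖ (‖A_Sᵀ(A_{-S}ŵ⁽ˢ⁾_{-S} - ξ)‖ + λ‖Ω_S² μ₀,S‖)`. -/
theorem leave_S_out_ridge_inequality
    {n p : ℕ} (A : Matrix (Fin n) (Fin p) ℝ) (ξ : Fin n → ℝ) (μ0 : Fin p → ℝ)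
    (ω : Fin p → ℝ) (c lam : ℝ) (hc : 0 < c) (hω : ∀ i, c ≤ ω i) (hlam : 0 < lam)
    (S : Finset (Fin p)) (wh wS : Fin p → ℝ)
    (hwh : ∀ w : Fin p → ℝ,
      (1/2) * (∑ i, (A.mulVec wh i - ξ i)^2) + (lam/2) * (∑ i, (ω i * (μ0 i + wh i))^2)
        ≤ (1/2) * (∑ i, (A.mulVec w i - ξ i)^2) + (lam/2) * (∑ i, (ω i * (μ0 i + w i))^2))
    (hwS0 : ∀ i ∈ S, wS i = 0)
    (hwSmin : ∀ w : Fin p → ℝ, (∀ i ∈ S, w i = 0) →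
      (1/2) * (∑ i, (A.mulVec wS i - ξ i)^2) + (lam/2) * (∑ i, (ω i * (μ0 i + wS i))^2)
        ≤ (1/2) * (∑ i, (A.mulVec w i - ξ i)^2) + (lam/2) * (∑ i, (ω i * (μ0 i + w i))^2)) :
    (1/2) * (∑ i, (A.mulVec (wS - wh) i)^2) + (lam * c^2/2) * (∑ i ∈ S, (wh i)^2)
      ≤ Real.sqrt (∑ i ∈ S, (wh i)^2) *
        (Real.sqrt (∑ i ∈ S, (Aᵀ.mulVec (A.mulVec wS - ξ) i)^2)
          + lam * Real.sqrt (∑ i ∈ S, (ω i^2 * μ0 i)^2)) := by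
  classical
  set a : Fin p → ℝ := fun i => Aᵀ.mulVec (A.mulVec wS - ξ) i with hadef
  set g : Fin p → ℝ := fun i => a i + lam * (ω i)^2 * (μ0 i + wS i) with hgdef
  -- transposition of the cross term
  have key : ∀ u : Fin p → ℝ,
      ∑ j, (A.mulVec wS j - ξ j) * A.mulVec u j = ∑ i, a i * u i := by
    intro u
    have : ∀ i, a i = ∑ j, A j i * (A.mulVec wS j - ξ j) := by
      intro i
      simp [hadef, Matrix.mulVec, dotProduct, Matrix.transpose_apply]
    simp only [this, Finset.sum_mul]
    rw [Finset.sum_comm]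
    apply Finset.sum_congr rfl
    intro j _
    simp only [Matrix.mulVec, dotProduct, Finset.mul_sum]
    apply Finset.sum_congr rfl
    intro i _
    ring
  -- quadratic expansion of F around wS
  have expand : ∀ u : Fin p → ℝ,
      (1/2) * (∑ i, (A.mulVec (wS + u) i - ξ i)^2)
          + (lam/2) * (∑ i, (ω i * (μ0 i + (wS + u) i))^2)
        = ((1/2) * (∑ i, (A.mulVec wS i - ξ i)^2)
            + (lam/2) * (∑ i, (ω i * (μ0 i + wS i))^2))
          + (∑ i, g i * u i)
          + ((1/2) * (∑ i, (A.mulVec u i)^2) + (lam/2) * (∑ i, (ω i * u i)^2)) := by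
    intro u
    have e1 : ∑ j, (A.mulVec (wS + u) j - ξ j)^2
        = ∑ j, ((A.mulVec wS j - ξ j)^2
            + 2 * ((A.mulVec wS j - ξ j) * A.mulVec u j) + (A.mulVec u j)^2) := by
      apply Finset.sum_congr rfl
      intro j _
      rw [Matrix.mulVec_add]
      simp only [Pi.add_apply]
      ring
    have e2 : ∑ i, (ω i * (μ0 i + (wS + u) i))^2
        = ∑ i, ((ω i * (μ0 i + wS i))^2
            + 2 * ((ω i)^2 * (μ0 i + wS i) * u i) + (ω i * u i)^2) := by
      apply Finset.sum_congr rfl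
      intro i _
      simp only [Pi.add_apply]
      ring
    have e4 : ∑ i, g i * u i
        = (∑ i, a i * u i) + lam * ∑ i, ((ω i)^2 * (μ0 i + wS i) * u i) := by
      rw [Finset.mul_sum, ← Finset.sum_add_distrib]
      apply Finset.sum_congr rfl
      intro i _
      simp only [hgdef]
      ring
    rw [e1, e2, e4]
    simp only [Finset.sum_add_distrib, ← Finset.mul_sum]
    rw [key u]
    ring
  -- KKT: gradient vanishes off S
  have kkt : ∀ i, i ∉ S → g i = 0 := by
    intro i hi
    set C : ℝ := (1/2) * (∑ j, (A j i)^2) + (lam/2) * (ω i)^2 with hCdef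
    have hCnn : 0 ≤ C := by positivity
    have hineq : ∀ t : ℝ, 0 ≤ g i * t + t^2 * C := by
      intro t
      have hconstr : ∀ j ∈ S, (wS + (Pi.single i t : Fin p → ℝ)) j = 0 := by
        intro j hj
        have hji : j ≠ i := fun h => hi (h ▸ hj)
        simp only [Pi.add_apply]
        rw [Pi.single_eq_of_ne hji, hwS0 j hj, add_zero]
      have h1 := hwSmin (wS + (Pi.single i t : Fin p → ℝ)) hconstr
      have h2 := expand (Pi.single i t : Fin p → ℝ)
      have s1 : ∑ j, g j * (Pi.single i t : Fin p → ℝ) j = g i * t := by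
        simp [Pi.single_apply, mul_ite]
      have s2 : ∑ j, (A.mulVec (Pi.single i t : Fin p → ℝ) j)^2 = t^2 * ∑ j, (A j i)^2 := by
        have hmv : ∀ j, A.mulVec (Pi.single i t : Fin p → ℝ) j = A j i * t := by
          intro j
          simp [Matrix.mulVec, dotProduct, Pi.single_apply, mul_ite]
        simp only [hmv]
        rw [Finset.mul_sum]
        apply Finset.sum_congr rfl
        intro j _
        ring
      have s3 : ∑ j, (ω j * (Pi.single i t : Fin p → ℝ) j)^2 = (ω i * t)^2 := by
        simp [Pi.single_apply, mul_ite]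
      rw [s1, s2, s3] at h2
      have h3 : 0 ≤ g i * t + (1/2 * (t^2 * ∑ j, (A j i)^2) + lam/2 * (ω i * t)^2) := by
        linarith
      rw [hCdef]
      nlinarith [h3]
    have hC1 : (0:ℝ) < C + 1 := by linarith
    have h := hineq (-(g i) / (C + 1))
    have e : g i * (-(g i) / (C + 1)) + (-(g i) / (C + 1))^2 * C
        = -((g i)^2 / (C + 1)^2) := by
      field_simp
      ring
    rw [e] at h
    have hz : (g i)^2 / (C + 1)^2 = 0 :=
      le_antisymm (by linarith) (by positivity)
    have hne : (C + 1)^2 ≠ 0 := by positivity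
    field_simp at hz
    simpa using hz
  -- Cauchy–Schwarz on S
  have cs : ∀ f h' : Fin p → ℝ,
      ∑ i ∈ S, f i * h' i
        ≤ Real.sqrt (∑ i ∈ S, (f i)^2) * Real.sqrt (∑ i ∈ S, (h' i)^2) := by
    intro f h'
    rcases le_or_gt (∑ i ∈ S, f i * h' i) 0 with hle | hpos
    · exact hle.trans (by positivity)
    · rw [← Real.sqrt_mul (by positivity)]
      exact (Real.le_sqrt hpos.le (by positivity)).2
        (Finset.sum_mul_sq_le_sq_mul_sq S f h')
  -- main comparison
  have h2 := expand (wh - wS)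
  rw [add_sub_cancel] at h2
  have h1 := hwh wS
  have hsum : ∑ i, g i * (wh - wS) i = ∑ i ∈ S, g i * (wh - wS) i :=
    (Finset.sum_subset (Finset.subset_univ S)
      (fun i _ hi => by rw [kkt i hi, zero_mul])).symm
  have hterm : ∑ i ∈ S, g i * (wh - wS) i
      = ∑ i ∈ S, (a i * wh i + lam * ((ω i)^2 * μ0 i * wh i)) := by
    apply Finset.sum_congr rfl
    intro i hi
    simp only [hgdef, Pi.sub_apply, hwS0 i hi]
    ring
  have hQ : (1/2) * (∑ i, (A.mulVec (wh - wS) i)^2)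
        + (lam/2) * (∑ i, (ω i * ((wh - wS) i))^2)
      ≤ ∑ i ∈ S, ((-(a i)) * wh i) + lam * ∑ i ∈ S, ((-(ω i^2 * μ0 i)) * wh i) := by
    rw [hsum, hterm] at h2
    have hexp : ∑ i ∈ S, ((-(a i)) * wh i) + lam * ∑ i ∈ S, ((-(ω i^2 * μ0 i)) * wh i)
        = -∑ i ∈ S, (a i * wh i + lam * ((ω i)^2 * μ0 i * wh i)) := by
      rw [Finset.mul_sum, ← Finset.sum_add_distrib, ← Finset.sum_neg_distrib]
      apply Finset.sum_congr rfl
      intro i _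
      ring
    rw [hexp]
    linarith
  -- lower bounds for the left side
  have hA : ∑ i, (A.mulVec (wS - wh) i)^2 = ∑ i, (A.mulVec (wh - wS) i)^2 := by
    apply Finset.sum_congr rfl
    intro j _
    have : A.mulVec (wS - wh) j = -(A.mulVec (wh - wS) j) := by
      rw [Matrix.mulVec_sub, Matrix.mulVec_sub]
      simp
    rw [this, neg_sq]
  have hω2 : (lam * c^2/2) * (∑ i ∈ S, (wh i)^2)
      ≤ (lam/2) * (∑ i, (ω i * ((wh - wS) i))^2) := by
    have step1 : ∑ i ∈ S, c^2 * (wh i)^2 ≤ ∑ i ∈ S, (ω i * ((wh - wS) i))^2 := by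
      apply Finset.sum_le_sum
      intro i hi
      have h1 : c^2 ≤ (ω i)^2 := pow_le_pow_left₀ hc.le (hω i) 2
      have : (ω i * ((wh - wS) i))^2 = (ω i)^2 * (wh i)^2 := by
        simp only [Pi.sub_apply, hwS0 i hi]
        ring
      rw [this]
      exact mul_le_mul_of_nonneg_right h1 (sq_nonneg _)
    have step2 : ∑ i ∈ S, (ω i * ((wh - wS) i))^2 ≤ ∑ i, (ω i * ((wh - wS) i))^2 :=
      Finset.sum_le_sum_of_subset_of_nonneg (Finset.subset_univ S)
        (fun i _ _ => sq_nonneg _)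
    have : ∑ i ∈ S, c^2 * (wh i)^2 = c^2 * ∑ i ∈ S, (wh i)^2 := by
      rw [Finset.mul_sum]
    nlinarith [step1, step2]
  -- Cauchy–Schwarz applications
  have cs1 : ∑ i ∈ S, ((-(a i)) * wh i)
      ≤ Real.sqrt (∑ i ∈ S, (a i)^2) * Real.sqrt (∑ i ∈ S, (wh i)^2) := by
    have := cs (fun i => -(a i)) wh
    simpa [neg_sq] using this
  have cs2 : ∑ i ∈ S, ((-(ω i^2 * μ0 i)) * wh i)
      ≤ Real.sqrt (∑ i ∈ S, (ω i^2 * μ0 i)^2) * Real.sqrt (∑ i ∈ S, (wh i)^2) := by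
    have := cs (fun i => -(ω i^2 * μ0 i)) wh
    simpa [neg_sq] using this
  have hrhs : Real.sqrt (∑ i ∈ S, (wh i)^2) *
      (Real.sqrt (∑ i ∈ S, (a i)^2) + lam * Real.sqrt (∑ i ∈ S, (ω i^2 * μ0 i)^2))
      = Real.sqrt (∑ i ∈ S, (a i)^2) * Real.sqrt (∑ i ∈ S, (wh i)^2)
        + lam * (Real.sqrt (∑ i ∈ S, (ω i^2 * μ0 i)^2) * Real.sqrt (∑ i ∈ S, (wh i)^2)) := by
    ring
  rw [hA]
  calc (1/2) * (∑ i, (A.mulVec (wh - wS) i)^2) + (lam * c^2/2) * (∑ i ∈ S, (wh i)^2)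
      ≤ (1/2) * (∑ i, (A.mulVec (wh - wS) i)^2)
          + (lam/2) * (∑ i, (ω i * ((wh - wS) i))^2) := by linarith
    _ ≤ ∑ i ∈ S, ((-(a i)) * wh i) + lam * ∑ i ∈ S, ((-(ω i^2 * μ0 i)) * wh i) := hQ
    _ ≤ Real.sqrt (∑ i ∈ S, (a i)^2) * Real.sqrt (∑ i ∈ S, (wh i)^2)
        + lam * (Real.sqrt (∑ i ∈ S, (ω i^2 * μ0 i)^2) * Real.sqrt (∑ i ∈ S, (wh i)^2)) := by
        have := mul_le_mul_of_nonneg_left cs2 hlam.le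
        linarith [cs1, this]
    _ = Real.sqrt (∑ i ∈ S, (wh i)^2) *
        (Real.sqrt (∑ i ∈ S, (a i)^2) + lam * Real.sqrt (∑ i ∈ S, (ω i^2 * μ0 i)^2)) := by
        ring
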